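/- Let V be a finite-dimensional real vector space. A 4-linear map T : V^4 → ℝ is an algebraic curvature tensor if and only if (1/12)·y_t*T = T, where y_t is the Young symmetrizer of the standard tableau t with rows {1,3} and {2,4}. -/

import Mathlib

/-- Action of a group ring element `a ∈ ℝ[S_r]` on an `r`-multilinear map:
`(aT)(v₁,…,v_r) = Σ_p a(p)·T(v_{p(1)},…,v_{p(r)})`. -/
noncomputable def gact {V : Type} [AddCommGroup V] [Module ℝ V] {r : ℕ}
    (a : MonoidAlgebra ℝ (Equiv.Perm (Fin r)))
    (T : MultilinearMap ℝ (fun _ : Fin r => V) ℝ) :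
    MultilinearMap ℝ (fun _ : Fin r => V) ℝ :=
  ∑ p : Equiv.Perm (Fin r), a.coeff p • T.domDomCongr p
/-- The star map `a* := Σ_p a(p)·p⁻¹` on the group ring `ℝ[S_r]`. -/
noncomputable def astar {r : ℕ} (a : MonoidAlgebra ℝ (Equiv.Perm (Fin r))) :
    MonoidAlgebra ℝ (Equiv.Perm (Fin r)) :=
  MonoidAlgebra.ofCoeff (Finsupp.equivFunOnFinite.symm (fun p => a.coeff p⁻¹))
/-- The Young symmetrizer `y_t = Σ_{p∈H_t} Σ_{q∈V_t} sign(q)·(p∘q)` of the tableau with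
rows `{1,3}`, `{2,4}` (indices `0`-based in `Fin 4`):
`H_t = {id, (1 3), (2 4), (1 3)(2 4)}`, `V_t = {id, (1 2), (3 4), (1 2)(3 4)}`. -/
noncomputable def yt : MonoidAlgebra ℝ (Equiv.Perm (Fin 4)) :=
  (MonoidAlgebra.single 1 1 + MonoidAlgebra.single (Equiv.swap 0 2) 1 +
     MonoidAlgebra.single (Equiv.swap 1 3) 1 +
     MonoidAlgebra.single (Equiv.swap 0 2 * Equiv.swap 1 3) 1) *
  (MonoidAlgebra.single 1 1 - MonoidAlgebra.single (Equiv.swap 0 1) 1 -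
     MonoidAlgebra.single (Equiv.swap 2 3) 1 +
     MonoidAlgebra.single (Equiv.swap 0 1 * Equiv.swap 2 3) 1)

variable {V : Type} [AddCommGroup V] [Module ℝ V] {r : ℕ}
lemma malg_add_apply (a b : MonoidAlgebra ℝ (Equiv.Perm (Fin r))) (p : Equiv.Perm (Fin r)) :
    (a + b).coeff p = a.coeff p + b.coeff p := rfl
lemma malg_sub_apply (a b : MonoidAlgebra ℝ (Equiv.Perm (Fin r))) (p : Equiv.Perm (Fin r)) :
    (a - b).coeff p = a.coeff p - b.coeff p := rfl
lemma gact_add (a b : MonoidAlgebra ℝ (Equiv.Perm (Fin r)))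
    (T : MultilinearMap ℝ (fun _ : Fin r => V) ℝ) :
    gact (a + b) T = gact a T + gact b T := by
  simp [gact, malg_add_apply, add_smul, Finset.sum_add_distrib]
lemma gact_sub (a b : MonoidAlgebra ℝ (Equiv.Perm (Fin r)))
    (T : MultilinearMap ℝ (fun _ : Fin r => V) ℝ) :
    gact (a - b) T = gact a T - gact b T := by
  simp [gact, malg_sub_apply, sub_smul, Finset.sum_sub_distrib]
  rw [← Finset.sum_sub_distrib]; exact Finset.sum_congr rfl fun p _ => by ext v; simp [sub_mul]
lemma gact_single (g : Equiv.Perm (Fin r)) (T : MultilinearMap ℝ (fun _ : Fin r => V) ℝ) :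
    gact (MonoidAlgebra.single g (1:ℝ)) T = T.domDomCongr g := by
  simp [gact, MonoidAlgebra.coeff_single, Finsupp.single_apply]
lemma astar_add (a b : MonoidAlgebra ℝ (Equiv.Perm (Fin r))) :
    astar (a + b) = astar a + astar b := by
  ext p; simp [astar, malg_add_apply]
lemma astar_sub (a b : MonoidAlgebra ℝ (Equiv.Perm (Fin r))) :
    astar (a - b) = astar a - astar b := by
  ext p; simp [astar, malg_sub_apply]
lemma astar_single (g : Equiv.Perm (Fin r)) (c : ℝ) :
    astar (MonoidAlgebra.single g c) = MonoidAlgebra.single g⁻¹ c := by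
  ext p
  simp only [astar, MonoidAlgebra.coeff_ofCoeff, MonoidAlgebra.coeff_single, Finsupp.single_apply]
  simp [inv_eq_iff_eq_inv]

set_option maxHeartbeats 1000000 in
lemma key (T : MultilinearMap ℝ (fun _ : Fin 4 => V) ℝ) (w x y z : V) :
    gact (astar yt) T ![w,x,y,z] =
      T ![w,x,y,z] - T ![x,w,y,z] - T ![w,x,z,y] + T ![x,w,z,y]
    + (T ![y,x,w,z] - T ![y,w,x,z] - T ![z,x,w,y] + T ![z,w,x,y])
    + (T ![w,z,y,x] - T ![x,z,y,w] - T ![w,y,z,x] + T ![x,y,z,w])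
    + (T ![y,z,w,x] - T ![y,z,x,w] - T ![z,y,w,x] + T ![z,y,x,w]) := by
  rw [yt]
  simp only [mul_add, add_mul, mul_sub, sub_mul, MonoidAlgebra.single_mul_single,
    one_mul, mul_one, astar_add, astar_sub, astar_single, gact_add, gact_sub, gact_single,
    MultilinearMap.add_apply, MultilinearMap.sub_apply, inv_one]
  have E1 : (MultilinearMap.domDomCongr (1 : Equiv.Perm (Fin 4)) T) ![w, x, y, z] = T ![w, x, y, z] := by
    simp only [MultilinearMap.domDomCongr_apply]; exact congrArg T (by funext i; fin_cases i <;> rfl)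
  have E2 : (MultilinearMap.domDomCongr (Equiv.swap 0 1)⁻¹ T) ![w, x, y, z] = T ![x, w, y, z] := by
    simp only [MultilinearMap.domDomCongr_apply]; exact congrArg T (by funext i; fin_cases i <;> rfl)
  have E3 : (MultilinearMap.domDomCongr (Equiv.swap 2 3)⁻¹ T) ![w, x, y, z] = T ![w, x, z, y] := by
    simp only [MultilinearMap.domDomCongr_apply]; exact congrArg T (by funext i; fin_cases i <;> rfl)
  have E4 : (MultilinearMap.domDomCongr (Equiv.swap 0 1 * Equiv.swap 2 3)⁻¹ T) ![w, x, y, z] = T ![x, w, z, y] := by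
    simp only [MultilinearMap.domDomCongr_apply]; exact congrArg T (by funext i; fin_cases i <;> rfl)
  have E5 : (MultilinearMap.domDomCongr (Equiv.swap 0 2)⁻¹ T) ![w, x, y, z] = T ![y, x, w, z] := by
    simp only [MultilinearMap.domDomCongr_apply]; exact congrArg T (by funext i; fin_cases i <;> rfl)
  have E6 : (MultilinearMap.domDomCongr (Equiv.swap 0 2 * Equiv.swap 0 1)⁻¹ T) ![w, x, y, z] = T ![y, w, x, z] := by
    simp only [MultilinearMap.domDomCongr_apply]; exact congrArg T (by funext i; fin_cases i <;> rfl)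
  have E7 : (MultilinearMap.domDomCongr (Equiv.swap 0 2 * Equiv.swap 2 3)⁻¹ T) ![w, x, y, z] = T ![z, x, w, y] := by
    simp only [MultilinearMap.domDomCongr_apply]; exact congrArg T (by funext i; fin_cases i <;> rfl)
  have E8 : (MultilinearMap.domDomCongr (Equiv.swap 0 2 * (Equiv.swap 0 1 * Equiv.swap 2 3))⁻¹ T) ![w, x, y, z] = T ![z, w, x, y] := by
    simp only [MultilinearMap.domDomCongr_apply]; exact congrArg T (by funext i; fin_cases i <;> rfl)
  have E9 : (MultilinearMap.domDomCongr (Equiv.swap 1 3)⁻¹ T) ![w, x, y, z] = T ![w, z, y, x] := by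
    simp only [MultilinearMap.domDomCongr_apply]; exact congrArg T (by funext i; fin_cases i <;> rfl)
  have E10 : (MultilinearMap.domDomCongr (Equiv.swap 1 3 * Equiv.swap 0 1)⁻¹ T) ![w, x, y, z] = T ![x, z, y, w] := by
    simp only [MultilinearMap.domDomCongr_apply]; exact congrArg T (by funext i; fin_cases i <;> rfl)
  have E11 : (MultilinearMap.domDomCongr (Equiv.swap 1 3 * Equiv.swap 2 3)⁻¹ T) ![w, x, y, z] = T ![w, y, z, x] := by
    simp only [MultilinearMap.domDomCongr_apply]; exact congrArg T (by funext i; fin_cases i <;> rfl)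
  have E12 : (MultilinearMap.domDomCongr (Equiv.swap 1 3 * (Equiv.swap 0 1 * Equiv.swap 2 3))⁻¹ T) ![w, x, y, z] = T ![x, y, z, w] := by
    simp only [MultilinearMap.domDomCongr_apply]; exact congrArg T (by funext i; fin_cases i <;> rfl)
  have E13 : (MultilinearMap.domDomCongr (Equiv.swap 0 2 * Equiv.swap 1 3)⁻¹ T) ![w, x, y, z] = T ![y, z, w, x] := by
    simp only [MultilinearMap.domDomCongr_apply]; exact congrArg T (by funext i; fin_cases i <;> rfl)
  have E14 : (MultilinearMap.domDomCongr (Equiv.swap 0 2 * Equiv.swap 1 3 * Equiv.swap 0 1)⁻¹ T) ![w, x, y, z] = T ![y, z, x, w] := by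
    simp only [MultilinearMap.domDomCongr_apply]; exact congrArg T (by funext i; fin_cases i <;> rfl)
  have E15 : (MultilinearMap.domDomCongr (Equiv.swap 0 2 * Equiv.swap 1 3 * Equiv.swap 2 3)⁻¹ T) ![w, x, y, z] = T ![z, y, w, x] := by
    simp only [MultilinearMap.domDomCongr_apply]; exact congrArg T (by funext i; fin_cases i <;> rfl)
  have E16 : (MultilinearMap.domDomCongr (Equiv.swap 0 2 * Equiv.swap 1 3 * (Equiv.swap 0 1 * Equiv.swap 2 3))⁻¹ T) ![w, x, y, z] = T ![z, y, x, w] := by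
    simp only [MultilinearMap.domDomCongr_apply]; exact congrArg T (by funext i; fin_cases i <;> rfl)
  rw [E1, E2, E3, E4, E5, E6, E7, E8, E9, E10, E11, E12, E13, E14, E15, E16]
  ring



/-- A 4-linear map `T : V⁴ → ℝ` on a finite-dimensional real vector space is
an algebraic curvature tensor iff `(1/12)·y_t*·T = T`. -/
theorem stmt_3 (V : Type) [AddCommGroup V] [Module ℝ V] [FiniteDimensional ℝ V]
    (T : MultilinearMap ℝ (fun _ : Fin 4 => V) ℝ) :
    ((∀ w x y z : V, T ![w, x, y, z] = - T ![w, x, z, y]) ∧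
     (∀ w x y z : V, T ![w, x, y, z] = T ![y, z, w, x]) ∧
     (∀ w x y z : V, T ![w, x, y, z] + T ![w, y, z, x] + T ![w, z, x, y] = 0)) ↔
    (1/12 : ℝ) • gact (astar yt) T = T := by
  constructor
  · rintro ⟨h1, h2, h3⟩
    have h4 : ∀ a b c d : V, T ![b, a, c, d] = - T ![a, b, c, d] := by
      intro a b c d
      rw [h2 b a c d, h1 c d b a, ← h2 a b c d]
    ext v
    have hv : v = ![v 0, v 1, v 2, v 3] := by funext i; fin_cases i <;> rfl
    rw [hv, MultilinearMap.smul_apply, key, smul_eq_mul]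
    linarith [h1 (v 0) (v 1) (v 2) (v 3), h1 (v 0) (v 1) (v 3) (v 2), h1 (v 0) (v 2) (v 1) (v 3), h1 (v 0) (v 2) (v 3) (v 1), h1 (v 0) (v 3) (v 1) (v 2), h1 (v 0) (v 3) (v 2) (v 1), h1 (v 1) (v 0) (v 2) (v 3), h1 (v 1) (v 0) (v 3) (v 2), h1 (v 1) (v 2) (v 0) (v 3), h1 (v 1) (v 2) (v 3) (v 0), h1 (v 1) (v 3) (v 0) (v 2), h1 (v 1) (v 3) (v 2) (v 0), h1 (v 2) (v 0) (v 1) (v 3), h1 (v 2) (v 0) (v 3) (v 1), h1 (v 2) (v 1) (v 0) (v 3), h1 (v 2) (v 1) (v 3) (v 0), h1 (v 2) (v 3) (v 0) (v 1), h1 (v 2) (v 3) (v 1) (v 0), h1 (v 3) (v 0) (v 1) (v 2), h1 (v 3) (v 0) (v 2) (v 1), h1 (v 3) (v 1) (v 0) (v 2), h1 (v 3) (v 1) (v 2) (v 0), h1 (v 3) (v 2) (v 0) (v 1), h1 (v 3) (v 2) (v 1) (v 0), h2 (v 0) (v 1) (v 2) (v 3), h2 (v 0) (v 1) (v 3) (v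 2), h2 (v 0) (v 2) (v 1) (v 3), h2 (v 0) (v 2) (v 3) (v 1), h2 (v 0) (v 3) (v 1) (v 2), h2 (v 0) (v 3) (v 2) (v 1), h2 (v 1) (v 0) (v 2) (v 3), h2 (v 1) (v 0) (v 3) (v 2), h2 (v 1) (v 2) (v 0) (v 3), h2 (v 1) (v 2) (v 3) (v 0), h2 (v 1) (v 3) (v 0) (v 2), h2 (v 1) (v 3) (v 2) (v 0), h2 (v 2) (v 0) (v 1) (v 3), h2 (v 2) (v 0) (v 3) (v 1), h2 (v 2) (v 1) (v 0) (v 3), h2 (v 2) (v 1) (v 3) (v 0), h2 (v 2) (v 3) (v 0) (v 1), h2 (v 2) (v 3) (v 1) (v 0), h2 (v 3) (v 0) (v 1) (v 2), h2 (v 3) (v 0) (v 2) (v 1), h2 (v 3) (v 1) (v 0) (v 2), h2 (v 3) (v 1) (v 2) (v 0), h2 (v 3) (v 2) (v 0) (v 1), h2 (v 3) (v 2) (v 1) (v 0), h3 (v 0) (v 1) (v 2) (v 3), h3 (v 0) (v 1) (v 3) (v 2), h3 (v 0) (v 2) (v 1) (v 3), h3 (v 0) (v 2) (v 3) (v 1),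 h3 (v 0) (v 3) (v 1) (v 2), h3 (v 0) (v 3) (v 2) (v 1), h3 (v 1) (v 0) (v 2) (v 3), h3 (v 1) (v 0) (v 3) (v 2), h3 (v 1) (v 2) (v 0) (v 3), h3 (v 1) (v 2) (v 3) (v 0), h3 (v 1) (v 3) (v 0) (v 2), h3 (v 1) (v 3) (v 2) (v 0), h3 (v 2) (v 0) (v 1) (v 3), h3 (v 2) (v 0) (v 3) (v 1), h3 (v 2) (v 1) (v 0) (v 3), h3 (v 2) (v 1) (v 3) (v 0), h3 (v 2) (v 3) (v 0) (v 1), h3 (v 2) (v 3) (v 1) (v 0), h3 (v 3) (v 0) (v 1) (v 2), h3 (v 3) (v 0) (v 2) (v 1), h3 (v 3) (v 1) (v 0) (v 2), h3 (v 3) (v 1) (v 2) (v 0), h3 (v 3) (v 2) (v 0) (v 1), h3 (v 3) (v 2) (v 1) (v 0), h4 (v 0) (v 1) (v 2) (v 3), h4 (v 0) (v 1) (v 3) (v 2), h4 (v 0) (v 2) (v 1) (v 3), h4 (v 0) (v 2) (v 3) (v 1), h4 (v 0) (v 3) (v 1) (v 2), h4 (v 0) (v 3) (v 2) (v 1), h4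 (v 1) (v 0) (v 2) (v 3), h4 (v 1) (v 0) (v 3) (v 2), h4 (v 1) (v 2) (v 0) (v 3), h4 (v 1) (v 2) (v 3) (v 0), h4 (v 1) (v 3) (v 0) (v 2), h4 (v 1) (v 3) (v 2) (v 0), h4 (v 2) (v 0) (v 1) (v 3), h4 (v 2) (v 0) (v 3) (v 1), h4 (v 2) (v 1) (v 0) (v 3), h4 (v 2) (v 1) (v 3) (v 0), h4 (v 2) (v 3) (v 0) (v 1), h4 (v 2) (v 3) (v 1) (v 0), h4 (v 3) (v 0) (v 1) (v 2), h4 (v 3) (v 0) (v 2) (v 1), h4 (v 3) (v 1) (v 0) (v 2), h4 (v 3) (v 1) (v 2) (v 0), h4 (v 3) (v 2) (v 0) (v 1), h4 (v 3) (v 2) (v 1) (v 0)]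
  · intro hT
    have hS : ∀ w x y z : V, T ![w, x, y, z] = (1/12 : ℝ) *
        (T ![w,x,y,z] - T ![x,w,y,z] - T ![w,x,z,y] + T ![x,w,z,y]
    + (T ![y,x,w,z] - T ![y,w,x,z] - T ![z,x,w,y] + T ![z,w,x,y])
    + (T ![w,z,y,x] - T ![x,z,y,w] - T ![w,y,z,x] + T ![x,y,z,w])
    + (T ![y,z,w,x] - T ![y,z,x,w] - T ![z,y,w,x] + T ![z,y,x,w])) := by
      intro w x y z
      conv_lhs => rw [← hT]
      rw [MultilinearMap.smul_apply, key, smul_eq_mul]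
    refine ⟨?_, ?_, ?_⟩ <;> intro w x y z
    · linarith [hS w x y z, hS w x z y]
    · linarith [hS w x y z, hS y z w x]
    · linarith [hS w x y z, hS w y z x, hS w z x y]
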